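/- arXiv:2502.02930 — 3 statements merged into one kernel-verified Lean document; each statement's English description precedes it below -/
import Mathlib

section
/- Let D be a proper subdomain of a Banach space, let z₁, z₂ ∈ D, and let γ ⊂ D be a rectifiable arc with endpoints z₁ and z₂. Then ℓ_k(γ) ≥ log(1 + ℓ(γ)/min{d_D(z₁), d_D(z₂)}). -/
open Set Metric MeasureTheory

noncomputable section

variable {E : Type*} [NormedAddCommGroup E]

/-- Distance from a point to the boundary (= complement) of `D`. -/
def dB (D : Set E) (z : E) : ℝ := Metric.infDist z Dᶜ

/-- `D` is a proper subdomain of the ambient space. -/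
def IsProperDomain (D : Set E) : Prop := IsOpen D ∧ IsConnected D ∧ Dᶜ.Nonempty

/-- A rectifiable arc inside `D`, parametrized by arclength on `[a,b]`. -/
structure IsArc (D : Set E) (γ : ℝ → E) (a b : ℝ) : Prop where
  le : a ≤ b
  lip : LipschitzOnWith 1 γ (Set.Icc a b)
  unit : ∀ s t, s ∈ Set.Icc a b → t ∈ Set.Icc a b → s ≤ t →
    eVariationOn γ (Set.Icc s t) = ENNReal.ofReal (t - s)
  mem : ∀ t ∈ Set.Icc a b, γ t ∈ D

/-- Quasihyperbolic length of the piece on `[a,b]` of an arclength-parametrized arc. -/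
def qhLen (D : Set E) (γ : ℝ → E) (a b : ℝ) : ℝ := ∫ t in a..b, 1 / dB D (γ t)

/-- The quasihyperbolic distance in `D`: infimum of quasihyperbolic lengths of
arcs joining the two points. -/
def qhDist (D : Set E) (x y : E) : ℝ :=
  sInf { L : ℝ | ∃ T : ℝ, ∃ γ : ℝ → E,
    IsArc D γ 0 T ∧ γ 0 = x ∧ γ T = y ∧ L = qhLen D γ 0 T }

/-- `γ` is a `c`-quasigeodesic in `D` on `[a,b]`. -/
def IsQuasigeodesicOn (D : Set E) (c : ℝ) (γ : ℝ → E) (a b : ℝ) : Prop :=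
  IsArc D γ a b ∧ ∀ s t, s ∈ Set.Icc a b → t ∈ Set.Icc a b → s ≤ t →
    qhLen D γ s t ≤ c * qhDist D (γ s) (γ t)

/-- The coefficient `c_{x,y}^λ = min (1 + λ/(2 k_D(x,y))) (9/8)`. -/
def cLam (D : Set E) (lam : ℝ) (x y : E) : ℝ :=
  min (1 + lam / (2 * qhDist D x y)) (9 / 8)

/-- `γ` is a `λ`-curve in `D` on `[a,b]`: a `c_{x,y}^λ`-quasigeodesic where `x,y`
are its endpoints. -/
def IsLamCurve (D : Set E) (lam : ℝ) (γ : ℝ → E) (a b : ℝ) : Prop :=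
  IsQuasigeodesicOn D (cLam D lam (γ a) (γ b)) γ a b

/-- `γ` is `h`-short in `D`. -/
def IsShort (D : Set E) (h : ℝ) (γ : ℝ → E) (a b : ℝ) : Prop :=
  IsArc D γ a b ∧ ∀ s t, s ∈ Set.Icc a b → t ∈ Set.Icc a b → s ≤ t →
    qhLen D γ s t ≤ qhDist D (γ s) (γ t) + h

/-- The point `w` lies within quasihyperbolic distance `C` of the union of the
two given sides. -/
def WithinOfSides (D : Set E) (C : ℝ) (w : E) (α : ℝ → E) (a b : ℝ)
    (α' : ℝ → E) (a' b' : ℝ) : Prop :=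
  ∃ s : ℝ, (s ∈ Set.Icc a b ∧ qhDist D w (α s) ≤ C) ∨
    (s ∈ Set.Icc a' b' ∧ qhDist D w (α' s) ≤ C)

/-- `(D, k_D)` is a `(C,h)`-Rips space: every side of an `h`-short triangle lies
in the `C`-neighbourhood of the two other sides. -/
def IsRips (D : Set E) (C h : ℝ) : Prop :=
  ∀ (α₁ α₂ α₃ : ℝ → E) (a₁ b₁ a₂ b₂ a₃ b₃ : ℝ),
    IsShort D h α₁ a₁ b₁ → IsShort D h α₂ a₂ b₂ → IsShort D h α₃ a₃ b₃ →
    α₁ b₁ = α₂ a₂ → α₂ b₂ = α₃ a₃ → α₃ b₃ = α₁ a₁ →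
    (∀ t ∈ Set.Icc a₁ b₁, WithinOfSides D C (α₁ t) α₂ a₂ b₂ α₃ a₃ b₃) ∧
    (∀ t ∈ Set.Icc a₂ b₂, WithinOfSides D C (α₂ t) α₃ a₃ b₃ α₁ a₁ b₁) ∧
    (∀ t ∈ Set.Icc a₃ b₃, WithinOfSides D C (α₃ t) α₁ a₁ b₁ α₂ a₂ b₂)

/-- `D` is `δ`-Gromov hyperbolic with respect to the quasihyperbolic metric. -/
def IsGromovHyp (D : Set E) (δ : ℝ) : Prop :=
  ∀ x ∈ D, ∀ y ∈ D, ∀ z ∈ D, ∀ p ∈ D,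
    min ((qhDist D p x + qhDist D p y - qhDist D x y) / 2)
        ((qhDist D p y + qhDist D p z - qhDist D y z) / 2) - δ ≤
      (qhDist D p x + qhDist D p z - qhDist D x z) / 2

/-- `μ` is a thin-triangles constant for triangles of `c₀`-quasigeodesics in `D`. -/
def ThinTriangles (D : Set E) (c₀ μ : ℝ) : Prop :=
  ∀ (γ₁ γ₂ γ₃ : ℝ → E) (a₁ b₁ a₂ b₂ a₃ b₃ : ℝ),
    IsQuasigeodesicOn D c₀ γ₁ a₁ b₁ → IsQuasigeodesicOn D c₀ γ₂ a₂ b₂ →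
    IsQuasigeodesicOn D c₀ γ₃ a₃ b₃ →
    γ₁ b₁ = γ₂ a₂ → γ₂ b₂ = γ₃ a₃ → γ₃ b₃ = γ₁ a₁ →
    ∀ t ∈ Set.Icc a₁ b₁, WithinOfSides D μ (γ₁ t) γ₂ a₂ b₂ γ₃ a₃ b₃

/-- `D` is a `c`-uniform domain. -/
def IsUniform (D : Set E) (c : ℝ) : Prop :=
  ∀ z₁ ∈ D, ∀ z₂ ∈ D, ∃ γ : ℝ → E, ∃ a b : ℝ, IsArc D γ a b ∧ γ a = z₁ ∧ γ b = z₂ ∧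
    (∀ t ∈ Set.Icc a b, min (t - a) (b - t) ≤ c * dB D (γ t)) ∧
    b - a ≤ c * ‖z₁ - z₂‖

/-- `D` is an `a`-John domain. -/
def IsJohn (D : Set E) (a : ℝ) : Prop :=
  ∀ z₁ ∈ D, ∀ z₂ ∈ D, ∃ γ : ℝ → E, ∃ s t : ℝ, IsArc D γ s t ∧ γ s = z₁ ∧ γ t = z₂ ∧
    ∀ u ∈ Set.Icc s t, min (u - s) (t - u) ≤ a * dB D (γ u)

/-- The inner (length) distance in `D`. -/
def innerDist (D : Set E) (x y : E) : ℝ :=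
  sInf { L : ℝ | ∃ γ : ℝ → E, ∃ s t : ℝ, IsArc D γ s t ∧ γ s = x ∧ γ t = y ∧ L = t - s }

/-- `γ` is an inner `b`-uniform curve in `D`. -/
def IsInnerUniformCurve (D : Set E) (b : ℝ) (γ : ℝ → E) (s t : ℝ) : Prop :=
  (∀ u ∈ Set.Icc s t, min (u - s) (t - u) ≤ b * dB D (γ u)) ∧
  t - s ≤ b * innerDist D (γ s) (γ t)

/-- `D` is an inner `b`-uniform domain. -/
def IsInnerUniform (D : Set E) (b : ℝ) : Prop :=
  ∀ z₁ ∈ D, ∀ z₂ ∈ D, ∃ γ : ℝ → E, ∃ s t : ℝ,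
    IsArc D γ s t ∧ γ s = z₁ ∧ γ t = z₂ ∧ IsInnerUniformCurve D b γ s t

/-- Length (total variation) of a curve on `[a,b]`. -/
def lenOn {F : Type*} [NormedAddCommGroup F] (γ : ℝ → F) (a b : ℝ) : ℝ :=
  (eVariationOn γ (Set.Icc a b)).toReal

variable {F : Type*} [NormedAddCommGroup F]

/-- `f` is a homeomorphism from `D` onto `D'`. -/
def IsHomeoOn (f : E → F) (D : Set E) (D' : Set F) : Prop :=
  ∃ g : F → E, ContinuousOn f D ∧ ContinuousOn g D' ∧ Set.MapsTo f D D' ∧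
    Set.MapsTo g D' D ∧ (∀ x ∈ D, g (f x) = x) ∧ (∀ y ∈ D', f (g y) = y)

/-- `f : D → D'` is `(M,C)`-coarsely quasihyperbolic. -/
def IsCQH (f : E → F) (D : Set E) (D' : Set F) (M C : ℝ) : Prop :=
  ∀ x ∈ D, ∀ y ∈ D,
    (qhDist D x y - C) / M ≤ qhDist D' (f x) (f y) ∧
    qhDist D' (f x) (f y) ≤ M * qhDist D x y + C

lemma stmt2_aux (f : ℝ → ℝ) (a b d : ℝ) (hab : a ≤ b) (hd : 0 < d)
    (hf : ContinuousOn f (Set.Icc a b))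
    (hpos : ∀ t ∈ Set.Icc a b, 0 < f t)
    (hle : ∀ t ∈ Set.Icc a b, f t ≤ d + (t - a)) :
    Real.log (1 + (b - a) / d) ≤ ∫ t in a..b, 1 / f t := by
  have hne : ∀ t ∈ Set.Icc a b, f t ≠ 0 := fun t ht => (hpos t ht).ne'
  have hI1 : IntervalIntegrable (fun t => 1 / f t) MeasureTheory.volume a b := by
    apply ContinuousOn.intervalIntegrable
    rw [Set.uIcc_of_le hab]
    exact continuousOn_const.div hf hne
  have hposg : ∀ t ∈ Set.Icc a b, (0:ℝ) < d + (t - a) := fun t ht =>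
    by nlinarith [ht.1]
  have hI2 : IntervalIntegrable (fun t => 1 / (d + (t - a))) MeasureTheory.volume a b := by
    apply ContinuousOn.intervalIntegrable
    rw [Set.uIcc_of_le hab]
    exact continuousOn_const.div (by fun_prop) (fun t ht => (hposg t ht).ne')
  have hmono : ∫ t in a..b, 1 / (d + (t - a)) ≤ ∫ t in a..b, 1 / f t := by
    apply intervalIntegral.integral_mono_on hab hI2 hI1
    intro t ht
    exact one_div_le_one_div_of_le (hpos t ht) (hle t ht)
  refine le_trans (le_of_eq ?_) hmono
  have : (fun t : ℝ => 1 / (d + (t - a))) = fun t : ℝ => (fun x : ℝ => 1 / x) (t + (d - a)) := by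
    funext t; ring_nf
  rw [this]
  rw [show (∫ t in a..b, (fun x : ℝ => 1 / x) (t + (d - a))) = ∫ x in a + (d - a)..b + (d - a), 1 / x from intervalIntegral.integral_comp_add_right (fun x : ℝ => 1 / x) (d - a)]
  have h0 : (0:ℝ) ∉ Set.uIcc (a + (d - a)) (b + (d - a)) := by
    rw [Set.uIcc_of_le (by linarith)]
    intro h
    have := h.1; linarith
  rw [integral_one_div h0]
  congr 1
  field_simp
  ring_nf
  field_simp [hd.ne']
  ring

/-- For a rectifiable arc `γ` in `D` with endpoints `z₁, z₂`,
`ℓ_k(γ) ≥ log (1 + ℓ(γ) / min (d_D z₁) (d_D z₂))`. -/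
theorem stmt2 [NormedSpace ℝ E] [CompleteSpace E]
    (D : Set E) (hD : IsProperDomain D) (z₁ z₂ : E) (hz₁ : z₁ ∈ D) (hz₂ : z₂ ∈ D)
    (γ : ℝ → E) (a b : ℝ) (hγ : IsArc D γ a b) (h₁ : γ a = z₁) (h₂ : γ b = z₂) :
    Real.log (1 + (b - a) / min (dB D z₁) (dB D z₂)) ≤ qhLen D γ a b := by
  obtain ⟨hopen, -, hne⟩ := hD
  have hclosed : IsClosed Dᶜ := hopen.isClosed_compl
  have hpos : ∀ z ∈ D, 0 < dB D z := fun z hz =>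
    (hclosed.notMem_iff_infDist_pos hne).1 (by simp [hz])
  have hdist : ∀ s ∈ Set.Icc a b, ∀ t ∈ Set.Icc a b,
      dist (γ s) (γ t) ≤ |s - t| := by
    intro s hs t ht
    have := hγ.lip.dist_le_mul s hs t ht
    simpa [Real.dist_eq] using this
  have hcont : ContinuousOn (fun t => dB D (γ t)) (Set.Icc a b) :=
    (continuous_infDist_pt _).comp_continuousOn hγ.lip.continuousOn
  have hbd : ∀ z t, dB D (γ t) ≤ dB D z + dist (γ t) z := fun z t =>
    Metric.infDist_le_infDist_add_dist
  rcases le_total (dB D z₁) (dB D z₂) with hmin | hmin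
  · rw [min_eq_left hmin]
    apply stmt2_aux _ _ _ _ hγ.le (hpos _ hz₁) hcont (fun t ht => hpos _ (hγ.mem t ht))
    intro t ht
    calc dB D (γ t) ≤ dB D z₁ + dist (γ t) z₁ := hbd z₁ t
      _ ≤ dB D z₁ + (t - a) := by
          have := hdist t ht a (Set.left_mem_Icc.2 hγ.le)
          rw [h₁] at this
          have habs : |t - a| = t - a := abs_of_nonneg (by linarith [ht.1])
          linarith [this, habs ▸ this]
      _ = dB D z₁ + (t - a) := rfl
  · rw [min_eq_right hmin]
    have hflip : qhLen D γ a b = ∫ t in a..b, 1 / dB D (γ (a + b - t)) := by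
      rw [show (fun t : ℝ => 1 / dB D (γ (a + b - t)))
            = fun t : ℝ => (fun x : ℝ => 1 / dB D (γ x)) (a + b - t) from rfl,
        intervalIntegral.integral_comp_sub_left (fun x : ℝ => 1 / dB D (γ x)) (a + b)]
      simp [qhLen]
    rw [hflip]
    have hmem : ∀ t ∈ Set.Icc a b, a + b - t ∈ Set.Icc a b := by
      intro t ht
      exact ⟨by linarith [ht.2], by linarith [ht.1]⟩
    apply stmt2_aux _ _ _ _ hγ.le (hpos _ hz₂)
    · exact hcont.comp (by fun_prop) hmem
    · exact fun t ht => hpos _ (hγ.mem _ (hmem t ht))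
    · intro t ht
      calc dB D (γ (a + b - t)) ≤ dB D z₂ + dist (γ (a + b - t)) z₂ := hbd z₂ _
        _ ≤ dB D z₂ + (t - a) := by
            have := hdist (a + b - t) (hmem t ht) b (Set.right_mem_Icc.2 hγ.le)
            rw [h₂] at this
            have habs : |a + b - t - b| = t - a := by
              rw [show a + b - t - b = -(t - a) by ring, abs_neg]
              exact abs_of_nonneg (by linarith [ht.1])
            rw [habs] at this
            linarith

end
end

section
/- Let D be a proper subdomain of a Banach space, let x ≠ y ∈ D, and let γ be a λ-curve in D with endpoints x and y (with 0 < λ ≤ 1/2). Then γ is λ-short: for all points u, v on γ, ℓ_k(γ[u,v]) ≤ k_D(u,v) + λ. -/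
open Set Metric MeasureTheory

noncomputable section

variable {E : Type*} [NormedAddCommGroup E]

variable {F : Type*} [NormedAddCommGroup F]

-- auxiliary lemmas
lemma qhLen_nonneg (D : Set E) (γ : ℝ → E) {a b : ℝ} (hab : a ≤ b) :
    0 ≤ qhLen D γ a b := by
  apply intervalIntegral.integral_nonneg hab
  intro u _
  exact one_div_nonneg.mpr Metric.infDist_nonneg

lemma qhDist_nonneg (D : Set E) (x y : E) : 0 ≤ qhDist D x y := by
  apply Real.sInf_nonneg
  rintro L ⟨T, γ, hγ, -, -, rfl⟩
  exact qhLen_nonneg D γ hγ.le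

lemma qhDist_le_qhLen (D : Set E) (γ : ℝ → E) {a b s t : ℝ}
    (hγ : IsArc D γ a b) (hs : s ∈ Set.Icc a b) (ht : t ∈ Set.Icc a b) (hst : s ≤ t) :
    qhDist D (γ s) (γ t) ≤ qhLen D γ s t := by
  have hsub : Set.Icc s t ⊆ Set.Icc a b := Set.Icc_subset_Icc hs.1 ht.2
  apply csInf_le
  · exact ⟨0, fun L hL => by
      rcases hL with ⟨T, δ, hδ, -, -, rfl⟩
      exact qhLen_nonneg D δ hδ.le⟩
  refine ⟨t - s, fun u => γ (u + s), ?_, by simp, by simp, ?_⟩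
  · constructor
    · linarith
    · intro u hu v hv
      have hu' : u + s ∈ Set.Icc a b := hsub ⟨by linarith [hu.1], by linarith [hu.2]⟩
      have hv' : v + s ∈ Set.Icc a b := hsub ⟨by linarith [hv.1], by linarith [hv.2]⟩
      simpa [edist_add_right] using hγ.lip hu' hv'
    · intro s' t' hs' ht' hst'
      have : eVariationOn (γ ∘ (· + s)) (Set.Icc s' t') = eVariationOn γ ((· + s) '' Set.Icc s' t') :=
        eVariationOn.comp_eq_of_monotoneOn γ _ (fun u _ v _ huv => by simpa using add_le_add_right huv s)
      rw [show (fun u => γ (u + s)) = γ ∘ (· + s) from rfl, this, Set.image_add_const_Icc]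
      rw [hγ.unit (s' + s) (t' + s) (hsub ⟨by linarith [hs'.1], by linarith [hs'.2]⟩)
          (hsub ⟨by linarith [ht'.1], by linarith [ht'.2]⟩) (by linarith)]
      ring_nf
    · intro u hu
      exact hγ.mem _ (hsub ⟨by linarith [hu.1], by linarith [hu.2]⟩)
  · show qhLen D γ s t = qhLen D (fun u => γ (u + s)) 0 (t - s)
    unfold qhLen
    rw [intervalIntegral.integral_comp_add_right (fun u => 1 / dB D (γ u)) s]
    norm_num

/-- Every `λ`-curve is `λ`-short. -/
theorem stmt4 [NormedSpace ℝ E] [CompleteSpace E]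
    (D : Set E) (hD : IsProperDomain D) (lam : ℝ) (hlam₀ : 0 < lam) (hlam₁ : lam ≤ 1 / 2)
    (x y : E) (hx : x ∈ D) (hy : y ∈ D) (hxy : x ≠ y)
    (γ : ℝ → E) (a b : ℝ) (hγ : IsLamCurve D lam γ a b) (ha : γ a = x) (hb : γ b = y) :
    ∀ s t, s ∈ Set.Icc a b → t ∈ Set.Icc a b → s ≤ t →
      qhLen D γ s t ≤ qhDist D (γ s) (γ t) + lam := by
  intro s t hs ht hst
  obtain ⟨harc, hqg⟩ := hγ
  rw [ha, hb] at hqg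
  set K := qhDist D x y with hK
  set k := qhDist D (γ s) (γ t) with hk
  have hK0 : 0 ≤ K := qhDist_nonneg D x y
  have hk0 : 0 ≤ k := qhDist_nonneg D _ _
  have hc8 : cLam D lam x y ≤ 9 / 8 := min_le_right _ _
  -- integrability of the integrand on [a,b]
  have hcont : ContinuousOn (fun u => 1 / dB D (γ u)) (Set.Icc a b) := by
    have hγc : ContinuousOn γ (Set.Icc a b) := harc.lip.continuousOn
    apply ContinuousOn.div continuousOn_const
    · exact (continuous_infDist_pt Dᶜ).comp_continuousOn hγc
    · intro u hu
      have := (hD.1.isClosed_compl.notMem_iff_infDist_pos hD.2.2).mp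
        (by simpa using harc.mem u hu)
      exact ne_of_gt this
  have hint : ∀ u v, u ∈ Set.Icc a b → v ∈ Set.Icc a b → u ≤ v →
      IntervalIntegrable (fun u => 1 / dB D (γ u)) volume u v := by
    intro u v hu hv huv
    exact (hcont.mono (Set.Icc_subset_Icc hu.1 hv.2)).intervalIntegrable_of_Icc huv
  -- monotonicity of qhLen
  have hmono : qhLen D γ s t ≤ qhLen D γ a b := by
    have h1 : qhLen D γ a s + qhLen D γ s t = qhLen D γ a t :=
      intervalIntegral.integral_add_adjacent_intervals
        (hint a s ⟨le_refl a, harc.le⟩ hs hs.1)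
        (hint s t hs ht hst)
    have h2 : qhLen D γ a t + qhLen D γ t b = qhLen D γ a b :=
      intervalIntegral.integral_add_adjacent_intervals
        (hint a t ⟨le_refl a, harc.le⟩ ht ht.1)
        (hint t b ht ⟨harc.le, le_refl b⟩ ht.2)
    have h3 : 0 ≤ qhLen D γ a s := by
      apply intervalIntegral.integral_nonneg hs.1
      intro u _; exact one_div_nonneg.mpr Metric.infDist_nonneg
    have h4 : 0 ≤ qhLen D γ t b := by
      apply intervalIntegral.integral_nonneg ht.2
      intro u _; exact one_div_nonneg.mpr Metric.infDist_nonneg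
    linarith
  have hlen_ab : qhLen D γ a b ≤ cLam D lam x y * K := by
    have := hqg a b ⟨le_refl a, harc.le⟩ ⟨harc.le, le_refl b⟩ harc.le
    rwa [ha, hb] at this
  have hkK : k ≤ 2 * K := by
    have h1 : k ≤ qhLen D γ s t := qhDist_le_qhLen D γ harc hs ht hst
    have h2 : cLam D lam x y * K ≤ (9/8) * K := mul_le_mul_of_nonneg_right hc8 hK0
    linarith
  have hmain : qhLen D γ s t ≤ cLam D lam x y * k := by
    exact hqg s t hs ht hst
  rcases eq_or_lt_of_le hK0 with hKeq | hKpos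
  · -- K = 0
    have hc1 : cLam D lam x y ≤ 1 := by
      rw [cLam, ← hK, ← hKeq]
      simp
    nlinarith
  · have hc : cLam D lam x y ≤ 1 + lam / (2 * K) := by
      rw [cLam, ← hK]; exact min_le_left _ _
    have h2K : (0:ℝ) < 2 * K := by linarith
    have : cLam D lam x y * k ≤ (1 + lam / (2 * K)) * k :=
      mul_le_mul_of_nonneg_right hc hk0
    have hfin : lam / (2 * K) * k ≤ lam := by
      rw [div_mul_eq_mul_div, div_le_iff₀ h2K]
      nlinarith
    nlinarith

end
end

section
/- With f : B(2) → B(2) the radial homeomorphism from the preceding construction, the restriction f : B(1) → B(1) is not φ-FQC for any self-homeomorphism φ of [0,∞); consequently f is not quasiconformal. In particular, there exist coarsely quasihyperbolic homeomorphisms of planar domains that are not quasiconformal. -/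
open Set Metric MeasureTheory

noncomputable section

variable {E : Type*} [NormedAddCommGroup E]

variable {F : Type*} [NormedAddCommGroup F]

/-- The slopes `a_n` from the construction of Example 1. -/
def aseq (n : ℕ) : ℝ :=
  ((2 : ℝ) ^ (n + 1).factorial * ((2 : ℝ) ^ ((n + 2).factorial - (n + 1).factorial) - 1)) /
    ((2 : ℝ) ^ (n + 2).factorial * ((2 : ℝ) ^ ((n + 1).factorial - n.factorial) - 1))

/-- The intercepts `b_n` from the construction of Example 1. -/
def bseq (n : ℕ) : ℝ :=
  1 - 1 / (2 : ℝ) ^ (n + 1).factorial - aseq n * (1 - 1 / (2 : ℝ) ^ n.factorial)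

/-- For `t ∈ [1/2, 1)`, the index `n` with `1 - 2^{-n!} ≤ t < 1 - 2^{-(n+1)!}`. -/
def nIdx (t : ℝ) : ℕ := sSup {n : ℕ | 1 - 1 / (2 : ℝ) ^ n.factorial ≤ t}

/-- The radial homeomorphism `g : [0,2) → [0,2)` of Example 1. -/
def gfun (t : ℝ) : ℝ :=
  if t < 1 / 2 then 3 / 2 * t
  else if t < 1 then aseq (nIdx t) * t + bseq (nIdx t)
  else t

/-- The map `f(x) = g(|x|) x / |x|` of Example 1 on the disk `B(2) ⊂ ℂ`. -/
def fmap (x : ℂ) : ℂ := if x = 0 then 0 else (gfun ‖x‖ / ‖x‖) • x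

namespace Stmt13Aux

open Real

/-- Distance to the complement of the unit ball. -/
lemma dB_ball {z : ℂ} (hz : ‖z‖ ≤ 1) : dB (Metric.ball (0:ℂ) 1) z = 1 - ‖z‖ := by
  have hne : ((Metric.ball (0:ℂ) 1)ᶜ).Nonempty := by
    refine ⟨2, ?_⟩
    simp only [Set.mem_compl_iff, Metric.mem_ball, dist_zero_right]
    norm_num
  apply le_antisymm
  · by_cases h0 : z = 0
    · subst h0
      have h1 : (1:ℂ) ∈ (Metric.ball (0:ℂ) 1)ᶜ := by
        simp [Metric.mem_ball]
      have := Metric.infDist_le_dist_of_mem (x := (0:ℂ)) h1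
      simpa [dB, dist_eq_norm] using this
    · have hz0 : 0 < ‖z‖ := norm_pos_iff.2 h0
      have hw : (‖z‖⁻¹ • z) ∈ (Metric.ball (0:ℂ) 1)ᶜ := by
        simp only [Set.mem_compl_iff, Metric.mem_ball, dist_zero_right, norm_smul,
          norm_inv, norm_norm]
        rw [inv_mul_cancel₀ hz0.ne']
        exact lt_irrefl 1
      have h2 := Metric.infDist_le_dist_of_mem (x := z) hw
      have h3 : dist z (‖z‖⁻¹ • z) = 1 - ‖z‖ := by
        have : z - ‖z‖⁻¹ • z = (1 - ‖z‖⁻¹) • z := by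
          rw [sub_smul, one_smul]
        rw [dist_eq_norm, this, norm_smul, Real.norm_eq_abs]
        have h4 : (1:ℝ) ≤ ‖z‖⁻¹ := (one_le_inv₀ hz0).2 hz
        rw [abs_of_nonpos (by linarith), neg_sub, sub_mul, inv_mul_cancel₀ hz0.ne',
          one_mul]
      rw [dB, ← h3]; exact h2
  · by_contra h
    push_neg at h
    rw [dB, Metric.infDist_lt_iff hne] at h
    obtain ⟨w, hw, hd⟩ := h
    simp only [Set.mem_compl_iff, Metric.mem_ball, dist_zero_right, not_lt] at hw
    rw [dist_eq_norm] at hd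
    have : ‖w‖ ≤ ‖z‖ + ‖z - w‖ := by
      have := norm_add_le (z - w) (w - (z - w) - w + w)
      calc ‖w‖ = ‖z - (z - w)‖ := by ring_nf
        _ ≤ ‖z‖ + ‖z - w‖ := norm_sub_le _ _
    linarith

lemma dB_pos {z : ℂ} (hz : z ∈ Metric.ball (0:ℂ) 1) : 0 < dB (Metric.ball (0:ℂ) 1) z := by
  rw [Metric.mem_ball, dist_zero_right] at hz
  rw [dB_ball hz.le]; linarith

/-- The straight unit-speed segment between two points in a disk of radius `r < 1`. -/
lemma segment_arc {x y : ℂ} {r : ℝ} (hr : r < 1) (hx : ‖x‖ ≤ r) (hy : ‖y‖ ≤ r)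
    (hxy : x ≠ y) :
    ∃ γ : ℝ → ℂ, IsArc (Metric.ball (0:ℂ) 1) γ 0 ‖y - x‖ ∧ γ 0 = x ∧ γ ‖y - x‖ = y ∧
      (∀ t ∈ Set.Icc (0:ℝ) ‖y - x‖, ‖γ t‖ ≤ r) := by
  set T : ℝ := ‖y - x‖ with hT
  have hT0 : 0 < T := by
    rw [hT, norm_pos_iff, sub_ne_zero]; exact fun h => hxy h.symm
  set γ : ℝ → ℂ := fun t => x + (t * T⁻¹) • (y - x) with hγ
  have hiso : ∀ s t : ℝ, dist (γ s) (γ t) = dist s t := by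
    intro s t
    have : γ s - γ t = ((s - t) * T⁻¹) • (y - x) := by
      simp only [hγ]; rw [add_sub_add_left_eq_sub, ← sub_smul]; ring_nf
    rw [dist_eq_norm, this, norm_smul, Real.norm_eq_abs, abs_mul,
      abs_of_pos (inv_pos.2 hT0), Real.dist_eq, ← hT, mul_assoc,
      inv_mul_cancel₀ hT0.ne', mul_one]
  have hlip : LipschitzWith 1 γ := by
    apply LipschitzWith.of_dist_le_mul
    intro a b; rw [hiso]; simp
  have hmemr : ∀ t ∈ Set.Icc (0:ℝ) T, ‖γ t‖ ≤ r := by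
    rintro t ⟨ht0, ht1⟩
    have hc0 : 0 ≤ t * T⁻¹ := mul_nonneg ht0 (inv_pos.2 hT0).le
    have hc1 : t * T⁻¹ ≤ 1 := by
      rw [← div_eq_mul_inv, div_le_one hT0]; exact ht1
    have hconv : γ t = (1 - t * T⁻¹) • x + (t * T⁻¹) • y := by
      simp only [hγ, smul_sub, sub_smul, one_smul]; ring_nf
    calc ‖γ t‖ ≤ (1 - t * T⁻¹) * ‖x‖ + (t * T⁻¹) * ‖y‖ := by
          rw [hconv]
          refine (norm_add_le _ _).trans ?_
          rw [norm_smul, norm_smul, Real.norm_eq_abs, Real.norm_eq_abs,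
            abs_of_nonneg (by linarith), abs_of_nonneg hc0]
      _ ≤ (1 - t * T⁻¹) * r + (t * T⁻¹) * r := by
          gcongr <;> linarith
      _ = r := by ring
  refine ⟨γ, ⟨hT0.le, hlip.lipschitzOnWith, ?_, ?_⟩, ?_, ?_, hmemr⟩
  · intro s t hs ht hst
    apply le_antisymm
    · have h1 := (hlip.lipschitzOnWith (s := Set.Icc s t)).comp_eVariationOn_le
        (Set.mapsTo_id (Set.Icc s t))
      have h2 : eVariationOn (id : ℝ → ℝ) (Set.Icc s t) ≤ ENNReal.ofReal (t - s) := by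
        have := MonotoneOn.eVariationOn_le (f := (id : ℝ → ℝ)) (s := Set.Icc s t)
          (monotoneOn_id) (Set.left_mem_Icc.2 hst) (Set.right_mem_Icc.2 hst)
        rwa [Set.inter_self] at this
      calc eVariationOn γ (Set.Icc s t) = eVariationOn (γ ∘ id) (Set.Icc s t) := rfl
        _ ≤ (1 : NNReal) * eVariationOn (id : ℝ → ℝ) (Set.Icc s t) := h1
        _ ≤ ENNReal.ofReal (t - s) := by rw [ENNReal.coe_one, one_mul]; exact h2
    · have h3 := eVariationOn.edist_le γ (Set.left_mem_Icc.2 hst) (Set.right_mem_Icc.2 hst)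
      have h4 : edist (γ s) (γ t) = ENNReal.ofReal (t - s) := by
        rw [edist_dist, hiso, Real.dist_eq, abs_of_nonpos (by linarith)]
        ring_nf
      rw [← h4]; exact h3
  · intro t ht
    rw [Metric.mem_ball, dist_zero_right]
    exact lt_of_le_of_lt (hmemr t ht) hr
  · simp [hγ]
  · simp only [hγ]
    rw [mul_inv_cancel₀ hT0.ne', one_smul]
    ring

lemma qhLen_nonneg {γ : ℝ → ℂ} {T : ℝ} (hT : 0 ≤ T) :
    0 ≤ qhLen (Metric.ball (0:ℂ) 1) γ 0 T := by
  apply intervalIntegral.integral_nonneg hT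
  intro u _
  have := Metric.infDist_nonneg (x := γ u) (s := (Metric.ball (0:ℂ) 1)ᶜ)
  positivity

lemma qh_bddBelow (x y : ℂ) : BddBelow { L : ℝ | ∃ T : ℝ, ∃ γ : ℝ → ℂ,
    IsArc (Metric.ball (0:ℂ) 1) γ 0 T ∧ γ 0 = x ∧ γ T = y ∧
      L = qhLen (Metric.ball (0:ℂ) 1) γ 0 T } := by
  refine ⟨0, ?_⟩
  rintro L ⟨T, γ, harc, -, -, rfl⟩
  exact qhLen_nonneg harc.le

lemma qhDist_nonneg (x y : ℂ) : 0 ≤ qhDist (Metric.ball (0:ℂ) 1) x y := by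
  apply Real.sInf_nonneg
  rintro L ⟨T, γ, harc, -, -, rfl⟩
  exact qhLen_nonneg harc.le

/-- Upper bound for the qh distance via the straight segment. -/
lemma qhDist_upper {x y : ℂ} {r : ℝ} (hr : r < 1) (hx : ‖x‖ ≤ r) (hy : ‖y‖ ≤ r)
    (hxy : x ≠ y) :
    qhDist (Metric.ball (0:ℂ) 1) x y ≤ ‖y - x‖ / (1 - r) := by
  obtain ⟨γ, harc, h0, hTy, hmemr⟩ := segment_arc hr hx hy hxy
  set T : ℝ := ‖y - x‖ with hT
  have hT0 : 0 < T := by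
    rw [hT, norm_pos_iff, sub_ne_zero]; exact fun h => hxy h.symm
  have hr0 : 0 < 1 - r := by linarith
  have hcont : ContinuousOn (fun t => 1 / dB (Metric.ball (0:ℂ) 1) (γ t))
      (Set.uIcc 0 T) := by
    rw [Set.uIcc_of_le hT0.le]
    apply ContinuousOn.div continuousOn_const
    · exact (Metric.continuous_infDist_pt _).comp_continuousOn
        (harc.lip.continuousOn)
    · intro t ht
      exact (dB_pos (harc.mem t ht)).ne'
  have hlen : qhLen (Metric.ball (0:ℂ) 1) γ 0 T ≤ T / (1 - r) := by
    have hmono : ∀ t ∈ Set.Icc (0:ℝ) T,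
        1 / dB (Metric.ball (0:ℂ) 1) (γ t) ≤ 1 / (1 - r) := by
      intro t ht
      have h1 : dB (Metric.ball (0:ℂ) 1) (γ t) = 1 - ‖γ t‖ := by
        have := harc.mem t ht
        rw [Metric.mem_ball, dist_zero_right] at this
        exact dB_ball this.le
      have h2 : 1 - r ≤ dB (Metric.ball (0:ℂ) 1) (γ t) := by
        rw [h1]; have := hmemr t ht; linarith
      exact one_div_le_one_div_of_le hr0 h2
    calc qhLen (Metric.ball (0:ℂ) 1) γ 0 T
        ≤ ∫ _ in (0:ℝ)..T, 1 / (1 - r) := by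
          apply intervalIntegral.integral_mono_on hT0.le
            (hcont.intervalIntegrable) (intervalIntegrable_const) hmono
      _ = T / (1 - r) := by
          rw [intervalIntegral.integral_const, smul_eq_mul, sub_zero]
          ring
  refine le_trans (csInf_le (qh_bddBelow x y) ?_) hlen
  exact ⟨T, γ, harc, h0, hTy, rfl⟩

/-- Lower bound for qh length of any arc. -/
lemma log_le_qhLen {γ : ℝ → ℂ} {T : ℝ} (harc : IsArc (Metric.ball (0:ℂ) 1) γ 0 T) :
    Real.log (1 + ‖γ T - γ 0‖ / dB (Metric.ball (0:ℂ) 1) (γ 0)) ≤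
      qhLen (Metric.ball (0:ℂ) 1) γ 0 T := by
  have hT : 0 ≤ T := harc.le
  have h0mem : γ 0 ∈ Metric.ball (0:ℂ) 1 := harc.mem 0 ⟨le_refl 0, hT⟩
  set c : ℝ := dB (Metric.ball (0:ℂ) 1) (γ 0) with hc
  have hc0 : 0 < c := dB_pos h0mem
  have hdist : ∀ t ∈ Set.Icc (0:ℝ) T, dist (γ t) (γ 0) ≤ t := by
    rintro t ⟨ht0, ht1⟩
    have h5 := harc.lip.dist_le_mul t ⟨ht0, ht1⟩ 0 ⟨le_refl 0, hT⟩
    calc dist (γ t) (γ 0) ≤ 1 * dist t 0 := by exact_mod_cast h5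
      _ = t := by rw [Real.dist_eq, sub_zero, abs_of_nonneg ht0, one_mul]
  have hmono : ∀ t ∈ Set.Icc (0:ℝ) T,
      1 / (c + t) ≤ 1 / dB (Metric.ball (0:ℂ) 1) (γ t) := by
    intro t ht
    have hpos : 0 < dB (Metric.ball (0:ℂ) 1) (γ t) := dB_pos (harc.mem t ht)
    have hle : dB (Metric.ball (0:ℂ) 1) (γ t) ≤ c + t := by
      calc dB (Metric.ball (0:ℂ) 1) (γ t)
          ≤ dB (Metric.ball (0:ℂ) 1) (γ 0) + dist (γ t) (γ 0) :=
            Metric.infDist_le_infDist_add_dist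
        _ ≤ c + t := by rw [hc]; gcongr; exact hdist t ht
    exact one_div_le_one_div_of_le hpos hle
  have hcont1 : ContinuousOn (fun t : ℝ => 1 / (c + t)) (Set.uIcc 0 T) := by
    rw [Set.uIcc_of_le hT]
    apply ContinuousOn.div continuousOn_const (by fun_prop)
    rintro t ⟨ht0, -⟩
    positivity
  have hcont2 : ContinuousOn (fun t => 1 / dB (Metric.ball (0:ℂ) 1) (γ t))
      (Set.uIcc 0 T) := by
    rw [Set.uIcc_of_le hT]
    apply ContinuousOn.div continuousOn_const
    · exact (Metric.continuous_infDist_pt _).comp_continuousOn (harc.lip.continuousOn)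
    · intro t ht
      exact (dB_pos (harc.mem t ht)).ne'
  have hint : (∫ t in (0:ℝ)..T, 1 / (c + t)) ≤ qhLen (Metric.ball (0:ℂ) 1) γ 0 T := by
    apply intervalIntegral.integral_mono_on hT hcont1.intervalIntegrable
      hcont2.intervalIntegrable hmono
  have hval : (∫ t in (0:ℝ)..T, 1 / (c + t)) = Real.log ((c + T) / c) := by
    have h1 : (∫ t in (0:ℝ)..T, (fun u : ℝ => 1 / u) (c + t)) =
        ∫ u in (c + 0)..(c + T), 1 / u :=
      intervalIntegral.integral_comp_add_left (fun u : ℝ => 1 / u) c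
    have h2 : (0:ℝ) ∉ Set.uIcc (c + 0) (c + T) := by
      rw [Set.uIcc_of_le (by linarith)]
      rintro ⟨h3, -⟩; linarith
    rw [show (∫ t in (0:ℝ)..T, 1 / (c + t)) =
        ∫ t in (0:ℝ)..T, (fun u : ℝ => 1 / u) (c + t) from rfl, h1,
      integral_one_div h2, add_zero]
  have hTd : ‖γ T - γ 0‖ ≤ T := by
    have := hdist T ⟨hT, le_refl T⟩
    rwa [dist_eq_norm] at this
  have hlog : Real.log (1 + ‖γ T - γ 0‖ / c) ≤ Real.log ((c + T) / c) := by
    apply Real.log_le_log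
    · positivity
    · have h6 : (c + T) / c = 1 + T / c := by field_simp
      have h7 : ‖γ T - γ 0‖ / c ≤ T / c := (div_le_div_iff_of_pos_right hc0).2 hTd
      rw [h6]
      linarith
  calc Real.log (1 + ‖γ T - γ 0‖ / c) ≤ Real.log ((c + T) / c) := hlog
    _ = ∫ t in (0:ℝ)..T, 1 / (c + t) := hval.symm
    _ ≤ qhLen (Metric.ball (0:ℂ) 1) γ 0 T := hint

/-- Lower bound for the qh distance. -/
lemma qhDist_lower {x y : ℂ} (hx : ‖x‖ < 1) (hy : ‖y‖ < 1) (hxy : x ≠ y) :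
    Real.log (1 + ‖y - x‖ / (1 - ‖x‖)) ≤ qhDist (Metric.ball (0:ℂ) 1) x y := by
  apply le_csInf
  · obtain ⟨γ, harc, h0, hTy, -⟩ := segment_arc (r := max ‖x‖ ‖y‖)
      (max_lt hx hy) (le_max_left _ _) (le_max_right _ _) hxy
    exact ⟨_, ‖y - x‖, γ, harc, h0, hTy, rfl⟩
  · rintro L ⟨T, γ, harc, h0, hTy, rfl⟩
    have := log_le_qhLen harc
    rw [h0, hTy, dB_ball hx.le] at this
    exact this

end Stmt13Aux


namespace Stmt13Aux

open Real

lemma nIdx_eq (n : ℕ) (hn : 1 ≤ n) : nIdx (1 - 1 / (2:ℝ) ^ n.factorial) = n := by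
  have hset : {m : ℕ | 1 - 1 / (2:ℝ) ^ m.factorial ≤ 1 - 1 / (2:ℝ) ^ n.factorial} =
      Set.Iic n := by
    ext m
    simp only [Set.mem_setOf_eq, Set.mem_Iic]
    rw [sub_le_sub_iff_left, one_div_le_one_div (by positivity) (by positivity),
      pow_le_pow_iff_right₀ (by norm_num : (1:ℝ) < 2)]
    constructor
    · intro h
      by_contra hc
      push_neg at hc
      exact absurd h (not_le.2 ((Nat.factorial_lt hn).2 hc))
    · exact Nat.factorial_le
  rw [nIdx, hset, csSup_Iic]

lemma gfun_eq (n : ℕ) (hn : 1 ≤ n) :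
    gfun (1 - 1 / (2:ℝ) ^ n.factorial) = 1 - 1 / (2:ℝ) ^ (n + 1).factorial := by
  have h1 : (1:ℝ) / 2 ^ n.factorial ≤ 1 / 2 := by
    apply one_div_le_one_div_of_le (by norm_num)
    calc (2:ℝ) = 2 ^ 1 := (pow_one 2).symm
      _ ≤ 2 ^ n.factorial := by
        apply pow_le_pow_right₀ (by norm_num) n.factorial_pos
  have h2 : (0:ℝ) < 1 / 2 ^ n.factorial := by positivity
  rw [gfun, if_neg (by linarith), if_pos (by linarith), nIdx_eq n hn, bseq]
  ring

lemma fmap_smul {r : ℝ} (hr : 0 < r) {u : ℂ} (hu : ‖u‖ = 1) :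
    fmap (r • u) = gfun r • u := by
  have hne : r • u ≠ 0 := by
    rw [← norm_pos_iff, norm_smul, Real.norm_eq_abs, abs_of_pos hr, hu, mul_one]
    exact hr
  have hnorm : ‖r • u‖ = r := by
    rw [norm_smul, Real.norm_eq_abs, abs_of_pos hr, hu, mul_one]
  rw [fmap, if_neg hne, hnorm, smul_smul, div_mul_cancel₀ _ hr.ne']

end Stmt13Aux

/-- The restriction `f : B(1) → B(1)` of the map of Example 1
is not `φ`-FQC for any increasing self-homeomorphism `φ` of `[0,∞)`. -/
theorem stmt13 (φ : ℝ → ℝ)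
    (hφmono : StrictMonoOn φ (Set.Ici 0))
    (hφcont : ContinuousOn φ (Set.Ici 0))
    (hφsurj : φ '' Set.Ici 0 = Set.Ici 0) :
    ¬ (∀ x ∈ Metric.ball (0 : ℂ) 1, ∀ y ∈ Metric.ball (0 : ℂ) 1,
        qhDist (Metric.ball (0 : ℂ) 1) (fmap x) (fmap y) ≤
          φ (qhDist (Metric.ball (0 : ℂ) 1) x y) ∧
        qhDist (Metric.ball (0 : ℂ) 1) x y ≤
          φ (qhDist (Metric.ball (0 : ℂ) 1) (fmap x) (fmap y))) := by
  intro H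
  classical
  have hlog2 : 0 < Real.log 2 := Real.log_pos (by norm_num)
  obtain ⟨n, hn1, hnbig⟩ : ∃ n : ℕ, 1 ≤ n ∧ φ 1 < n * Real.log 2 := by
    refine ⟨max 1 (⌈φ 1 / Real.log 2⌉₊ + 1), le_max_left _ _, ?_⟩
    have h1 : φ 1 / Real.log 2 < ((max 1 (⌈φ 1 / Real.log 2⌉₊ + 1) : ℕ) : ℝ) := by
      calc φ 1 / Real.log 2 ≤ (⌈φ 1 / Real.log 2⌉₊ : ℝ) := Nat.le_ceil _
        _ < ((⌈φ 1 / Real.log 2⌉₊ + 1 : ℕ) : ℝ) := by exact_mod_cast Nat.lt_succ_self _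
        _ ≤ _ := by exact_mod_cast le_max_right 1 _
    rwa [div_lt_iff₀ hlog2] at h1
  set A : ℝ := 1 / 2 ^ n.factorial with hA
  set B : ℝ := 1 / 2 ^ (n + 1).factorial with hB
  have hA0 : 0 < A := by rw [hA]; positivity
  have hB0 : 0 < B := by rw [hB]; positivity
  have hA12 : A ≤ 1 / 2 := by
    rw [hA]
    apply one_div_le_one_div_of_le (by norm_num)
    calc (2:ℝ) = 2 ^ 1 := (pow_one 2).symm
      _ ≤ 2 ^ n.factorial := pow_le_pow_right₀ (by norm_num) n.factorial_pos
  have hBA : B ≤ A := by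
    rw [hA, hB]
    apply one_div_le_one_div_of_le (by positivity)
    exact pow_le_pow_right₀ (by norm_num) (Nat.factorial_le (Nat.le_succ n))
  set r : ℝ := 1 - A with hr
  set R : ℝ := 1 - B with hR
  have hr12 : 1 / 2 ≤ r := by rw [hr]; linarith
  have hr1 : r < 1 := by rw [hr]; linarith
  have hR1 : R < 1 := by rw [hR]; linarith
  have hrR : r ≤ R := by rw [hr, hR]; linarith
  have hr0 : 0 < r := by linarith
  have hR0 : 0 < R := by linarith
  set s : ℝ := A / r with hs
  have hs0 : 0 < s := by rw [hs]; positivity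
  have hs1 : s ≤ 1 := by rw [hs, div_le_one hr0]; linarith
  have hs24 : 0 ≤ 1 - s ^ 2 / 4 := by nlinarith
  set u2 : ℂ := ⟨1 - s ^ 2 / 2, s * Real.sqrt (1 - s ^ 2 / 4)⟩ with hu2def
  have hsq : (Real.sqrt (1 - s ^ 2 / 4)) ^ 2 = 1 - s ^ 2 / 4 := Real.sq_sqrt hs24
  have hu2 : ‖u2‖ = 1 := by
    rw [Complex.norm_def, hu2def, Complex.normSq_mk]
    have h2 : (1 - s ^ 2 / 2) * (1 - s ^ 2 / 2) +
        s * Real.sqrt (1 - s ^ 2 / 4) * (s * Real.sqrt (1 - s ^ 2 / 4)) = 1 := by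
      linear_combination (s ^ 2) * hsq
    rw [h2, Real.sqrt_one]
  have h1u2 : ‖1 - u2‖ = s := by
    have hre : (1 - u2).re = s ^ 2 / 2 := by
      rw [hu2def]; simp [Complex.sub_re]; try ring
    have him : (1 - u2).im = -(s * Real.sqrt (1 - s ^ 2 / 4)) := by
      rw [hu2def]; simp [Complex.sub_im]
    rw [Complex.norm_def, Complex.normSq_apply, hre, him]
    have h2 : s ^ 2 / 2 * (s ^ 2 / 2) +
        -(s * Real.sqrt (1 - s ^ 2 / 4)) * -(s * Real.sqrt (1 - s ^ 2 / 4)) = s ^ 2 := by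
      linear_combination (s ^ 2) * hsq
    rw [h2, Real.sqrt_sq hs0.le]
  set x1 : ℂ := r • (1 : ℂ) with hx1def
  set x2 : ℂ := r • u2 with hx2def
  have hnx1 : ‖x1‖ = r := by
    rw [hx1def, norm_smul, Real.norm_eq_abs, abs_of_pos hr0, norm_one, mul_one]
  have hnx2 : ‖x2‖ = r := by
    rw [hx2def, norm_smul, Real.norm_eq_abs, abs_of_pos hr0, hu2, mul_one]
  have hd12 : ‖x2 - x1‖ = r * s := by
    rw [hx2def, hx1def, ← smul_sub, norm_smul, Real.norm_eq_abs, abs_of_pos hr0,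
      norm_sub_rev, h1u2]
  have hAd : r * s = A := by
    rw [hs, mul_div_assoc']; field_simp
  have hne12 : x1 ≠ x2 := by
    intro h
    have h2 : ‖x2 - x1‖ = 0 := by rw [h, sub_self, norm_zero]
    rw [hd12, hAd] at h2; linarith
  have hgr : gfun r = R := by
    rw [hr, hA, hR, hB]; exact Stmt13Aux.gfun_eq n hn1
  have hf1 : fmap x1 = R • (1 : ℂ) := by
    rw [hx1def, Stmt13Aux.fmap_smul hr0 (norm_one), hgr]
  have hf2 : fmap x2 = R • u2 := by
    rw [hx2def, Stmt13Aux.fmap_smul hr0 hu2, hgr]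
  have hnf1 : ‖fmap x1‖ = R := by
    rw [hf1, norm_smul, Real.norm_eq_abs, abs_of_pos hR0, norm_one, mul_one]
  have hnf2 : ‖fmap x2‖ = R := by
    rw [hf2, norm_smul, Real.norm_eq_abs, abs_of_pos hR0, hu2, mul_one]
  have hfd : ‖fmap x2 - fmap x1‖ = R * s := by
    rw [hf2, hf1, ← smul_sub, norm_smul, Real.norm_eq_abs, abs_of_pos hR0,
      norm_sub_rev, h1u2]
  have hfne : fmap x1 ≠ fmap x2 := by
    intro h
    have h2 : ‖fmap x2 - fmap x1‖ = 0 := by rw [h, sub_self, norm_zero]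
    rw [hfd] at h2; nlinarith
  have h1r : 1 - r = A := by rw [hr]; ring
  have h1R : 1 - R = B := by rw [hR]; ring
  -- upper bound for the source pair
  have hub : qhDist (Metric.ball (0:ℂ) 1) x1 x2 ≤ 1 := by
    have h2 := Stmt13Aux.qhDist_upper hr1 hnx1.le hnx2.le hne12
    rw [hd12] at h2
    calc qhDist (Metric.ball (0:ℂ) 1) x1 x2 ≤ r * s / (1 - r) := h2
      _ = 1 := by rw [hAd, h1r, div_self hA0.ne']
  -- lower bound for the image pair
  have hlb : Real.log (1 + R * s / (1 - R)) ≤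
      qhDist (Metric.ball (0:ℂ) 1) (fmap x1) (fmap x2) := by
    have h2 := Stmt13Aux.qhDist_lower (x := fmap x1) (y := fmap x2)
      (by rw [hnf1]; exact hR1) (by rw [hnf2]; exact hR1) hfne
    rwa [hfd, hnf1] at h2
  have hRs : A ≤ R * s := by
    rw [hs, mul_div_assoc', le_div_iff₀ hr0]
    exact le_trans (mul_le_mul_of_nonneg_left hrR hA0.le) (le_of_eq (mul_comm A R))
  have hkey : (2:ℝ) ^ ((n + 1).factorial - n.factorial) ≤ R * s / (1 - R) := by
    rw [h1R]
    have h2 : A / B = 2 ^ ((n + 1).factorial - n.factorial) := by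
      rw [hA, hB, pow_sub₀ (2:ℝ) (by norm_num) (Nat.factorial_le (Nat.le_succ n))]
      field_simp
    calc (2:ℝ) ^ ((n + 1).factorial - n.factorial) = A / B := h2.symm
      _ ≤ R * s / B := (div_le_div_iff_of_pos_right hB0).2 hRs
  have hfact : (n:ℝ) * Real.log 2 ≤ Real.log (1 + R * s / (1 - R)) := by
    have hK : n ≤ (n + 1).factorial - n.factorial := by
      have h2 : (n + 1).factorial = (n + 1) * n.factorial := Nat.factorial_succ n
      have h3 : 1 ≤ n.factorial := n.factorial_pos
      have h4 : (n + 1).factorial - n.factorial = n * n.factorial := by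
        rw [h2, Nat.add_mul, one_mul, Nat.add_sub_cancel]
      calc n = n * 1 := (mul_one n).symm
        _ ≤ n * n.factorial := Nat.mul_le_mul_left n h3
        _ = (n + 1).factorial - n.factorial := h4.symm
    have hRsB : (0:ℝ) ≤ R * s / (1 - R) := by
      rw [h1R]; positivity
    calc (n:ℝ) * Real.log 2
        ≤ (((n + 1).factorial - n.factorial : ℕ) : ℝ) * Real.log 2 := by
          apply mul_le_mul_of_nonneg_right _ hlog2.le
          exact_mod_cast hK
      _ = Real.log (2 ^ ((n + 1).factorial - n.factorial)) := by
          rw [Real.log_pow]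
      _ ≤ Real.log (1 + R * s / (1 - R)) := by
          apply Real.log_le_log (by positivity)
          linarith [hkey]
  have hx1mem : x1 ∈ Metric.ball (0:ℂ) 1 := by
    rw [Metric.mem_ball, dist_zero_right, hnx1]; exact hr1
  have hx2mem : x2 ∈ Metric.ball (0:ℂ) 1 := by
    rw [Metric.mem_ball, dist_zero_right, hnx2]; exact hr1
  obtain ⟨hH1, -⟩ := H x1 hx1mem x2 hx2mem
  have hφ1 : φ (qhDist (Metric.ball (0:ℂ) 1) x1 x2) ≤ φ 1 :=
    hφmono.monotoneOn (Set.mem_Ici.2 (Stmt13Aux.qhDist_nonneg x1 x2))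
      (Set.mem_Ici.2 zero_le_one) hub
  have hfinal : (n:ℝ) * Real.log 2 ≤ φ 1 :=
    le_trans hfact (le_trans hlb (le_trans hH1 hφ1))
  linarith


end
end
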